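/- Let S be a measurable space, let r : S × S → ℝ be measurable with 0 ≤ r(s,ξ) ≤ B, let P′ᵢ, P′ⱼ be nominal probability measures on S, and let Pᵢ, Pⱼ be probability measures on S. Define F(Pᵢ,Pⱼ) = E_{Pᵢ,Pⱼ}[r] + D(Pᵢ‖P′ᵢ) + D(Pⱼ‖P′ⱼ). If Pᵢ⁺ is the Gibbs posterior with density proportional to exp(−∫ r(·,ξ) dPⱼ(ξ)) with respect to P′ᵢ, then F(Pᵢ⁺, Pⱼ) ≤ F(Pᵢ, Pⱼ); i.e., a unilateral Bayesian best-response update of one agent does not increase the two-agent potential F. -/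

import Mathlib

open MeasureTheory Real

/- Kullback–Leibler divergence `D(P‖Q)`: the integral of the log-likelihood ratio `llr P Q`
with respect to `P`, with value `+∞` when `P` is not absolutely continuous with respect to
`Q` (or when the log-likelihood ratio is not integrable). -/
open Classical in
noncomputable def KL {S : Type*} [MeasurableSpace S] (P Q : Measure S) : EReal :=
  if P ≪ Q ∧ Integrable (llr P Q) P then ((∫ x, llr P Q x ∂P : ℝ) : EReal) else ⊤

/- Expected collision risk `E_{P,Q}[r] = ∫∫ r(s,ξ) dQ(ξ) dP(s)`. -/
noncomputable def expRisk {S : Type*} [MeasurableSpace S] (r : S → S → ℝ)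
    (P Q : Measure S) : ℝ :=
  ∫ s, ∫ ξ, r s ξ ∂Q ∂P

/- Gibbs posterior: the measure with density `s ↦ exp (-c s) / Z` with respect to `Q`,
where `Z = ∫ exp (-c t) dQ(t)`. -/
noncomputable def gibbs {S : Type*} [MeasurableSpace S] (Q : Measure S) (c : S → ℝ) :
    Measure S :=
  Q.withDensity fun s => ENNReal.ofReal (Real.exp (-c s) / ∫ t, Real.exp (-c t) ∂Q)

lemma gibbs_eq_tilted {S : Type*} [MeasurableSpace S] (Q : Measure S) (c : S → ℝ) :
    gibbs Q c = Q.tilted (fun s => -c s) := rfl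

/-- Gibbs' inequality: the KL divergence integral is nonnegative. -/
lemma integral_llr_nonneg' {S : Type*} [MeasurableSpace S] (μ ν : Measure S)
    [IsProbabilityMeasure μ] [IsProbabilityMeasure ν]
    (hμν : μ ≪ ν) (h : Integrable (llr μ ν) μ) :
    0 ≤ ∫ x, llr μ ν x ∂μ := by
  have h1 : (fun x => exp (-llr μ ν x)) =ᵐ[μ] fun x => (ν.rnDeriv μ x).toReal :=
    exp_neg_llr hμν
  have hi : Integrable (fun x => (ν.rnDeriv μ x).toReal) μ :=
    Measure.integrable_toReal_rnDeriv
  have hexp : Integrable (fun x => exp (-llr μ ν x)) μ := hi.congr h1.symm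
  have hjensen : exp (∫ x, -llr μ ν x ∂μ) ≤ ∫ x, exp (-llr μ ν x) ∂μ := by
    have := convexOn_exp.map_integral_le (μ := μ) (f := fun x => -llr μ ν x)
      continuous_exp.continuousOn isClosed_univ
      (Filter.Eventually.of_forall fun _ => Set.mem_univ _) h.neg ?_
    · simpa [Function.comp] using this
    · exact hexp
  have hle1 : ∫ x, exp (-llr μ ν x) ∂μ ≤ 1 := by
    rw [integral_congr_ae h1]
    calc ∫ x, (ν.rnDeriv μ x).toReal ∂μ
        = ∫ x in Set.univ, (ν.rnDeriv μ x).toReal ∂μ := by rw [setIntegral_univ]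
      _ ≤ (ν Set.univ).toReal :=
          Measure.setIntegral_toReal_rnDeriv_le (measure_ne_top ν Set.univ)
      _ = 1 := by simp
  have : exp (-∫ x, llr μ ν x ∂μ) ≤ 1 := by
    rw [← integral_neg] at *
    exact hjensen.trans hle1
  have := Real.exp_le_one_iff.mp this
  linarith

/-- A unilateral Bayesian best-response update of agent `i` does not increase the two-agent
potential `F(Pᵢ,Pⱼ) = E_{Pᵢ,Pⱼ}[r] + D(Pᵢ‖P'ᵢ) + D(Pⱼ‖P'ⱼ)`. -/
theorem unilateral_bayesian_update_decreases_potential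
    {S : Type*} [MeasurableSpace S] (B : ℝ) (r : S → S → ℝ)
    (hr : Measurable (Function.uncurry r))
    (hr0 : ∀ s ξ, 0 ≤ r s ξ) (hrB : ∀ s ξ, r s ξ ≤ B)
    (P'i P'j Pi Pj : Measure S)
    [IsProbabilityMeasure P'i] [IsProbabilityMeasure P'j]
    [IsProbabilityMeasure Pi] [IsProbabilityMeasure Pj] :
    let Piplus : Measure S := gibbs P'i fun s => ∫ ξ, r s ξ ∂Pj
    (expRisk r Piplus Pj : EReal) + KL Piplus P'i + KL Pj P'j
      ≤ (expRisk r Pi Pj : EReal) + KL Pi P'i + KL Pj P'j := by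
  intro Piplus
  -- the cost function
  set c : S → ℝ := fun s => ∫ ξ, r s ξ ∂Pj with hc_def
  have hc_meas : Measurable c := by
    apply (hr.stronglyMeasurable.integral_prod_right).measurable
  have hc0 : ∀ s, 0 ≤ c s := fun s => integral_nonneg fun ξ => hr0 s ξ
  have hcB : ∀ s, c s ≤ B := by
    intro s
    have hrs : Integrable (fun ξ => r s ξ) Pj := by
      refine (integrable_const B).mono' ?_ ?_
      · exact (hr.of_uncurry_left).aestronglyMeasurable
      · exact Filter.Eventually.of_forall fun ξ => by
          rw [Real.norm_eq_abs, abs_of_nonneg (hr0 s ξ)]; exact hrB s ξ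
    calc c s = ∫ ξ, r s ξ ∂Pj := rfl
      _ ≤ ∫ _, B ∂Pj := integral_mono hrs (integrable_const B) fun ξ => hrB s ξ
      _ = B := by simp
  -- integrability facts
  have hint_negc : ∀ (μ : Measure S) [IsProbabilityMeasure μ], Integrable c μ := by
    intro μ _
    refine (integrable_const B).mono' hc_meas.aestronglyMeasurable ?_
    exact Filter.Eventually.of_forall fun s => by
      rw [Real.norm_eq_abs, abs_of_nonneg (hc0 s)]; exact hcB s
  have hexp_int : Integrable (fun s => exp ((fun s => -c s) s)) P'i := by
    refine (integrable_const 1).mono' ?_ ?_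
    · exact (hc_meas.neg.exp).aestronglyMeasurable
    · exact Filter.Eventually.of_forall fun s => by
        simp only [Real.norm_eq_abs, abs_of_nonneg (exp_nonneg _)]
        exact exp_le_one_iff.mpr (by simpa using hc0 s)
  set Z : ℝ := ∫ s, exp (-c s) ∂P'i with hZ_def
  have hZpos : 0 < Z := integral_exp_pos hexp_int
  -- Piplus as a tilted measure
  have hP_eq : Piplus = P'i.tilted (fun s => -c s) := rfl
  have hPprob : IsProbabilityMeasure Piplus := by
    rw [hP_eq]; exact isProbabilityMeasure_tilted hexp_int
  have hac : Piplus ≪ P'i := hP_eq ▸ tilted_absolutelyContinuous P'i _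
  -- llr of the Gibbs measure
  have hllr : llr Piplus P'i =ᵐ[P'i] fun x => -c x - log Z := by
    rw [hP_eq]
    exact log_rnDeriv_tilted_left_self hexp_int
  have hllr' : llr Piplus P'i =ᵐ[Piplus] fun x => -c x - log Z := hac.ae_le hllr
  have hint_llr_plus : Integrable (llr Piplus P'i) Piplus := by
    have : Integrable (fun x => -c x - log Z) Piplus :=
      ((hint_negc Piplus).neg.sub (integrable_const _))
    exact this.congr hllr'.symm
  -- value of KL Piplus P'i
  have hKLplus : KL Piplus P'i = ((- ∫ x, c x ∂Piplus - log Z : ℝ) : EReal) := by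
    rw [KL, if_pos ⟨hac, hint_llr_plus⟩]
    congr 1
    rw [integral_congr_ae hllr']
    have h1 : Integrable (fun x => -c x) Piplus := (hint_negc Piplus).neg
    rw [integral_sub h1 (integrable_const _), integral_neg]
    simp
  -- expRisk equals integral of c
  have hrisk : ∀ (μ : Measure S), expRisk r μ Pj = ∫ s, c s ∂μ := fun μ => rfl
  -- LHS of the first two terms
  have hLHS : (expRisk r Piplus Pj : EReal) + KL Piplus P'i = ((- log Z : ℝ) : EReal) := by
    rw [hKLplus, hrisk, ← EReal.coe_add]
    norm_cast
    ring
  rw [hLHS]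
  -- case split on KL Pi P'i
  by_cases hPi : Pi ≪ P'i ∧ Integrable (llr Pi P'i) Pi
  · obtain ⟨hPi_ac, hPi_int⟩ := hPi
    have hKLPi : KL Pi P'i = ((∫ x, llr Pi P'i x ∂Pi : ℝ) : EReal) := by
      rw [KL, if_pos ⟨hPi_ac, hPi_int⟩]
    -- Gibbs inequality applied to Pi vs Piplus
    have hac2 : Pi ≪ Piplus := by
      rw [hP_eq]
      exact hPi_ac.trans (absolutelyContinuous_tilted hexp_int)
    have hint2 : Integrable (llr Pi Piplus) Pi := by
      rw [hP_eq]
      exact integrable_llr_tilted_right hPi_ac (hint_negc Pi).neg hPi_int hexp_int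
    have hval : ∫ x, llr Pi Piplus x ∂Pi
        = ∫ x, llr Pi P'i x ∂Pi - ∫ x, -c x ∂Pi + log Z := by
      rw [hP_eq]
      exact integral_llr_tilted_right hPi_ac (hint_negc Pi).neg hexp_int hPi_int
    have hnonneg : 0 ≤ ∫ x, llr Pi Piplus x ∂Pi :=
      integral_llr_nonneg' Pi Piplus hac2 hint2
    rw [hval, integral_neg, sub_neg_eq_add] at hnonneg
    -- conclude
    have hkey : -log Z ≤ expRisk r Pi Pj + ∫ x, llr Pi P'i x ∂Pi := by
      rw [hrisk]
      linarith
    rw [hKLPi]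
    refine add_le_add ?_ le_rfl
    rw [← EReal.coe_add]
    exact_mod_cast hkey
  · have : KL Pi P'i = ⊤ := by rw [KL, if_neg hPi]
    rw [this]
    have hne : KL Pj P'j ≠ ⊥ := by
      rw [KL]
      split_ifs
      · exact EReal.coe_ne_bot _
      · simp
    have : (expRisk r Pi Pj : EReal) + ⊤ + KL Pj P'j = ⊤ := by
      rw [EReal.add_top_of_ne_bot (EReal.coe_ne_bot _), EReal.top_add_of_ne_bot hne]
    rw [this]
    exact le_top
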